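/- Let n, m be positive integers. There exists a Type II solution (x, y, z) ∈ ℕ^3 of m/n = 1/x + 1/y + 1/z if and only if there exist positive integers a, b, e such that e divides a + b, m·a·b divides n + e, and (n + e)/m is coprime to n. -/

import Mathlib

/-- `(x, y, z)` is a Type I solution of `m/n = 1/x + 1/y + 1/z`: a solution in
positive integers where `n` divides `x` and `n` is coprime to both `y` and `z`. -/
def IsTypeISolution (m n x y z : ℕ) : Prop :=
  0 < x ∧ 0 < y ∧ 0 < z ∧ (m : ℚ) / n = 1 / x + 1 / y + 1 / z ∧
    n ∣ x ∧ Nat.Coprime n y ∧ Nat.Coprime n z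

/-- `(x, y, z)` is a Type II solution of `m/n = 1/x + 1/y + 1/z`: a solution in
positive integers where `n` divides both `y` and `z` and `n` is coprime to `x`. -/
def IsTypeIISolution (m n x y z : ℕ) : Prop :=
  0 < x ∧ 0 < y ∧ 0 < z ∧ (m : ℚ) / n = 1 / x + 1 / y + 1 / z ∧
    Nat.Coprime n x ∧ n ∣ y ∧ n ∣ z

theorem stmt_7 (m n : ℕ) (hm : 0 < m) (hn : 0 < n) :
    (∃ x y z : ℕ, IsTypeIISolution m n x y z) ↔
      ∃ a b e : ℕ, 0 < a ∧ 0 < b ∧ 0 < e ∧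
        e ∣ a + b ∧ m * a * b ∣ n + e ∧
        Nat.Coprime ((n + e) / m) n := by
  constructor
  · rintro ⟨x, y, z, hx, hy, hz, heq, hco, ⟨y1, rfl⟩, ⟨z1, rfl⟩⟩
    have hy1 : 0 < y1 := Nat.pos_of_ne_zero (by rintro rfl; simp at hy)
    have hz1 : 0 < z1 := Nat.pos_of_ne_zero (by rintro rfl; simp at hz)
    -- the basic natural-number equation
    have keyN : m * x * y1 * z1 = n * y1 * z1 + x * z1 + x * y1 := by
      have hn0 : (n:ℚ) ≠ 0 := by positivity
      have hx0 : (x:ℚ) ≠ 0 := by positivity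
      have hy0 : (y1:ℚ) ≠ 0 := by positivity
      have hz0 : (z1:ℚ) ≠ 0 := by positivity
      push_cast at heq
      field_simp at heq
      have key : (m:ℚ) * x * y1 * z1 = n * y1 * z1 + x * z1 + x * y1 := by
        apply mul_left_cancel₀ (pow_ne_zero 2 hn0)
        linear_combination (n:ℚ)^2 * heq
      exact_mod_cast key
    have hlt : n < m * x := by
      have h1 : n * (y1 * z1) < (m * x) * (y1 * z1) := by
        calc n * (y1 * z1) < n * (y1 * z1) + (x * z1 + x * y1) := by
              have : 0 < x * z1 + x * y1 := by positivity
              omega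
          _ = (m * x) * (y1 * z1) := by
              calc n * (y1 * z1) + (x * z1 + x * y1) = n * y1 * z1 + x * z1 + x * y1 := by ring
                _ = m * x * y1 * z1 := keyN.symm
                _ = (m * x) * (y1 * z1) := by ring
      exact Nat.lt_of_mul_lt_mul_right (by simpa [mul_assoc] using h1)
    set e := m * x - n with hedef
    have he : n + e = m * x := by omega
    have hepos : 0 < e := by omega
    have heq2 : e * (y1 * z1) = x * z1 + x * y1 := by
      have h3 : n * (y1 * z1) + e * (y1 * z1) = n * (y1 * z1) + (x * z1 + x * y1) := by
        calc n * (y1 * z1) + e * (y1 * z1) = (n + e) * (y1 * z1) := by ring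
          _ = (m * x) * (y1 * z1) := by rw [he]
          _ = m * x * y1 * z1 := by ring
          _ = n * y1 * z1 + (x * z1 + x * y1) := by rw [keyN]; ring
          _ = n * (y1 * z1) + (x * z1 + x * y1) := by ring
      exact Nat.add_left_cancel h3
    set d := Nat.gcd y1 z1 with hddef
    have hdpos : 0 < d := Nat.gcd_pos_of_pos_left _ hy1
    set a := y1 / d with hadef
    set b := z1 / d with hbdef
    have hay : y1 = a * d := (Nat.div_mul_cancel (Nat.gcd_dvd_left y1 z1)).symm
    have hbz : z1 = b * d := (Nat.div_mul_cancel (Nat.gcd_dvd_right y1 z1)).symm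
    have hab : Nat.Coprime a b := Nat.coprime_div_gcd_div_gcd hdpos
    have hapos : 0 < a := by
      rcases Nat.eq_zero_or_pos a with h | h
      · rw [h] at hay; omega
      · exact h
    have hbpos : 0 < b := by
      rcases Nat.eq_zero_or_pos b with h | h
      · rw [h] at hbz; omega
      · exact h
    have heq3 : e * d * (a * b) = x * (a + b) := by
      have h4 : (e * d * (a * b)) * d = (x * (a + b)) * d := by
        calc (e * d * (a * b)) * d = e * ((a * d) * (b * d)) := by ring
          _ = e * (y1 * z1) := by rw [← hay, ← hbz]
          _ = x * z1 + x * y1 := heq2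
          _ = x * (b * d) + x * (a * d) := by rw [← hay, ← hbz]
          _ = (x * (a + b)) * d := by ring
      exact Nat.eq_of_mul_eq_mul_right hdpos h4
    have hcoex : Nat.Coprime e x := by
      have h1 : Nat.gcd e x ∣ n + e := by
        rw [he]; exact Dvd.dvd.mul_left (Nat.gcd_dvd_right e x) m
      have h2 : Nat.gcd e x ∣ n := by
        have := Nat.dvd_sub h1 (Nat.gcd_dvd_left e x)
        simpa using this
      have h3 : Nat.gcd e x ∣ Nat.gcd n x := Nat.dvd_gcd h2 (Nat.gcd_dvd_right e x)
      have h4 : Nat.gcd n x = 1 := hco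
      exact Nat.dvd_one.mp (h4 ▸ h3)
    have he_ab : e ∣ a + b := by
      refine hcoex.dvd_of_dvd_mul_left ?_
      exact ⟨d * (a * b), by rw [← heq3]; ring⟩
    have hab_x : a * b ∣ x := by
      have c1 : Nat.Coprime a (a + b) := by
        simpa [Nat.add_comm] using (Nat.coprime_add_self_right (m := a) (n := b)).mpr hab
      have c2 : Nat.Coprime b (a + b) := by
        simpa [Nat.add_comm] using (Nat.coprime_add_self_right (m := b) (n := a)).mpr hab.symm
      have c3 : Nat.Coprime (a * b) (a + b) := Nat.Coprime.mul c1 c2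
      refine c3.dvd_of_dvd_mul_right ?_
      exact ⟨e * d, by rw [← heq3]; ring⟩
    refine ⟨a, b, e, hapos, hbpos, hepos, he_ab, ?_, ?_⟩
    · rw [he]
      rcases hab_x with ⟨t, ht⟩
      exact ⟨t, by rw [ht]; ring⟩
    · have hxe : (n + e) / m = x := by rw [he, Nat.mul_div_cancel_left x hm]
      rw [hxe]
      exact hco.symm
  · rintro ⟨a, b, e, ha, hb, he, hdvd, hdvd2, hcop⟩
    have hm' : m ∣ n + e := dvd_trans ⟨a * b, by ring⟩ hdvd2
    set x := (n + e) / m with hxdef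
    have hx : m * x = n + e := Nat.mul_div_cancel' hm'
    have hxpos : 0 < x := by
      rcases Nat.eq_zero_or_pos x with h | h
      · rw [h, Nat.mul_zero] at hx; omega
      · exact h
    have hab : a * b ∣ x := by
      have : m * (a * b) ∣ m * x := by
        rw [hx]; simpa [mul_assoc] using hdvd2
      exact (mul_dvd_mul_iff_left (Nat.pos_iff_ne_zero.mp hm)).mp this
    set c := x / (a * b) with hcdef
    have hc : a * b * c = x := Nat.mul_div_cancel' hab
    have hcpos : 0 < c := by
      rcases Nat.eq_zero_or_pos c with h | h
      · rw [h, Nat.mul_zero] at hc; omega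
      · exact h
    set k := (a + b) / e with hkdef
    have hk : e * k = a + b := Nat.mul_div_cancel' hdvd
    have hkpos : 0 < k := by
      rcases Nat.eq_zero_or_pos k with h | h
      · rw [h, Nat.mul_zero] at hk; omega
      · exact h
    refine ⟨a * b * c, n * (k * (a * c)), n * (k * (b * c)), by positivity, by positivity,
      by positivity, ?_, ?_, ⟨k * (a * c), rfl⟩, ⟨k * (b * c), rfl⟩⟩
    · -- the equation
      have H1 : m * (a * b * c) = n + e := by rw [hc, hx]
      have h1 : (m : ℚ) * (a * b * c) = n + e := by exact_mod_cast congrArg (Nat.cast : ℕ → ℚ) H1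
      have h2 : (e : ℚ) * k = a + b := by exact_mod_cast congrArg (Nat.cast : ℕ → ℚ) hk
      have hn0 : (n:ℚ) ≠ 0 := by positivity
      have ha0 : (a:ℚ) ≠ 0 := by positivity
      have hb0 : (b:ℚ) ≠ 0 := by positivity
      have hc0 : (c:ℚ) ≠ 0 := by positivity
      have hk0 : (k:ℚ) ≠ 0 := by positivity
      push_cast
      field_simp
      linear_combination (k:ℚ) * h1 + h2
    · -- coprimality
      have : Nat.Coprime x n := by rwa [hxdef]
      have hx' : x = a * b * c := hc.symm
      rw [← hx']
      exact this.symm
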